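/- Let Γ = A₅, B = the stabilizer of 5 (≅ A₄), Δ = ⟨(1 2 3)⟩, and let Γ act on ℝ[Γ] by componentwise conjugation. Then there exist an element w ∈ ℝ[Δ] and an element α ∈ Γ \ B with α · w ∈ ℝ[B] but α · w ∉ B · w; in particular (Γ · w) ∩ ℝ[B] ≠ B · w. -/

import Mathlib

/-- Componentwise conjugation action of `Γ` on its real group algebra `ℝ[Γ]`. -/
noncomputable def conjS {Γ : Type*} [Group Γ] (δ : Γ) (f : MonoidAlgebra ℝ Γ) :
    MonoidAlgebra ℝ Γ :=
  MonoidAlgebra.ofCoeff (Finsupp.mapDomain (fun g => δ * g * δ⁻¹) f.coeff)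

/-- The 3-cycle `(1 2 3)` (on letters `0, 1, 2` of `Fin 5`). -/
def c5 : Equiv.Perm (Fin 5) := Equiv.swap 0 1 * Equiv.swap 1 2

theorem hc5 : c5 ∈ alternatingGroup (Fin 5) := by
  simp [Equiv.Perm.mem_alternatingGroup, c5]

/-- The 3-cycle `(1 2 3)` as an element of `A₅`. -/
def a5c : ↥(alternatingGroup (Fin 5)) := ⟨c5, hc5⟩

/-- `Δ = ⟨(1 2 3)⟩ ≤ A₅`. -/
def Δ5 : Subgroup ↥(alternatingGroup (Fin 5)) := Subgroup.zpowers a5c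

/-- `B ≤ A₅`, the stabilizer of the letter `5` (here `4 : Fin 5`), a copy of `A₄`. -/
def B5 : Subgroup ↥(alternatingGroup (Fin 5)) :=
  MulAction.stabilizer ↥(alternatingGroup (Fin 5)) (4 : Fin 5)

set_option maxRecDepth 10000

/-- The double transposition `(0 1)(3 4)`, which inverts `c5`. -/
def d5 : Equiv.Perm (Fin 5) := Equiv.swap 0 1 * Equiv.swap 3 4

theorem hd5 : d5 ∈ alternatingGroup (Fin 5) := by
  simp [Equiv.Perm.mem_alternatingGroup, d5]

/-- `(0 1)(3 4)` as an element of `A₅`. -/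
def a5d : ↥(alternatingGroup (Fin 5)) := ⟨d5, hd5⟩

lemma key : ∀ b : Equiv.Perm (Fin 5), Equiv.Perm.sign b = 1 → b 4 = 4 →
    b * c5 * b⁻¹ ≠ c5 * c5 := by decide

lemma conj_d5 : d5 * c5 * d5⁻¹ = c5 * c5 := by decide

lemma d5_ne_four : d5 4 ≠ 4 := by decide

lemma mem_B5_iff (b : ↥(alternatingGroup (Fin 5))) :
    b ∈ B5 ↔ (b : Equiv.Perm (Fin 5)) 4 = 4 := by
  rw [B5, MulAction.mem_stabilizer_iff]
  rfl

/-- There is `w ∈ ℝ[Δ]` and `α ∈ A₅ \\ B` with `α·w ∈ ℝ[B]` but `α·w ∉ B·w`; in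
particular `(A₅·w) ∩ ℝ[B] ≠ B·w`, so the suborbifold is not saturated. -/
theorem not_saturated_witness :
    ∃ w : MonoidAlgebra ℝ ↥(alternatingGroup (Fin 5)),
      w.coeff ∈ Finsupp.supported ℝ ℝ (Δ5 : Set ↥(alternatingGroup (Fin 5))) ∧
      ∃ α : ↥(alternatingGroup (Fin 5)), α ∉ B5 ∧
        (conjS α w).coeff ∈ Finsupp.supported ℝ ℝ (B5 : Set ↥(alternatingGroup (Fin 5))) ∧
        (∀ b ∈ B5, conjS b w ≠ conjS α w) ∧
        {x | ∃ g : ↥(alternatingGroup (Fin 5)), conjS g w = x} ∩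
            {x : MonoidAlgebra ℝ ↥(alternatingGroup (Fin 5)) |
              x.coeff ∈ Finsupp.supported ℝ ℝ (B5 : Set ↥(alternatingGroup (Fin 5)))} ≠
          {x | ∃ b ∈ B5, conjS b w = x} := by
  refine ⟨MonoidAlgebra.ofCoeff (Finsupp.single a5c 1), ?_, a5d, ?_, ?_, ?_, ?_⟩
  · exact Finsupp.single_mem_supported ℝ 1 (Subgroup.mem_zpowers a5c)
  · rw [mem_B5_iff]
    exact d5_ne_four
  · simp only [Set.mem_setOf_eq, conjS, MonoidAlgebra.coeff_ofCoeff, Finsupp.mapDomain_single]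
    refine Finsupp.single_mem_supported ℝ 1 ?_
    rw [SetLike.mem_coe, mem_B5_iff]
    have : ((a5d * a5c * a5d⁻¹ : ↥(alternatingGroup (Fin 5))) :
        Equiv.Perm (Fin 5)) = c5 * c5 := conj_d5
    rw [this]
    decide
  · intro b hb h
    rw [conjS, conjS, MonoidAlgebra.ofCoeff_inj, MonoidAlgebra.coeff_ofCoeff, Finsupp.mapDomain_single, Finsupp.mapDomain_single,
      Finsupp.single_left_inj (one_ne_zero)] at h
    have hb4 : (b : Equiv.Perm (Fin 5)) 4 = 4 := (mem_B5_iff b).mp hb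
    have hsign : Equiv.Perm.sign (b : Equiv.Perm (Fin 5)) = 1 := b.2
    have hcoe : ((b * a5c * b⁻¹ : ↥(alternatingGroup (Fin 5))) : Equiv.Perm (Fin 5)) =
        ((a5d * a5c * a5d⁻¹ : ↥(alternatingGroup (Fin 5))) : Equiv.Perm (Fin 5)) :=
      congrArg _ h
    have : (b : Equiv.Perm (Fin 5)) * c5 * (b : Equiv.Perm (Fin 5))⁻¹ = c5 * c5 := by
      rw [← conj_d5]; exact hcoe
    exact key _ hsign hb4 this
  · intro hEq
    have hmem : conjS a5d (MonoidAlgebra.ofCoeff (Finsupp.single a5c 1)) ∈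
        {x | ∃ g : ↥(alternatingGroup (Fin 5)), conjS g (MonoidAlgebra.ofCoeff (Finsupp.single a5c 1)) = x} ∩
          {x : MonoidAlgebra ℝ ↥(alternatingGroup (Fin 5)) |
            x.coeff ∈ Finsupp.supported ℝ ℝ (B5 : Set ↥(alternatingGroup (Fin 5)))} := by
      constructor
      · exact ⟨a5d, rfl⟩
      · simp only [Set.mem_setOf_eq, conjS, MonoidAlgebra.coeff_ofCoeff, Finsupp.mapDomain_single]
        refine Finsupp.single_mem_supported ℝ 1 ?_
        rw [SetLike.mem_coe, mem_B5_iff]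
        have : ((a5d * a5c * a5d⁻¹ : ↥(alternatingGroup (Fin 5))) :
            Equiv.Perm (Fin 5)) = c5 * c5 := conj_d5
        rw [this]
        decide
    rw [hEq] at hmem
    obtain ⟨b, hb, hbw⟩ := hmem
    -- repeat the argument of the previous bullet
    rw [conjS, conjS, MonoidAlgebra.ofCoeff_inj, MonoidAlgebra.coeff_ofCoeff, Finsupp.mapDomain_single, Finsupp.mapDomain_single,
      Finsupp.single_left_inj (one_ne_zero)] at hbw
    have hb4 : (b : Equiv.Perm (Fin 5)) 4 = 4 := (mem_B5_iff b).mp hb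
    have hsign : Equiv.Perm.sign (b : Equiv.Perm (Fin 5)) = 1 := b.2
    have hcoe : ((b * a5c * b⁻¹ : ↥(alternatingGroup (Fin 5))) : Equiv.Perm (Fin 5)) =
        ((a5d * a5c * a5d⁻¹ : ↥(alternatingGroup (Fin 5))) : Equiv.Perm (Fin 5)) :=
      congrArg _ hbw
    have : (b : Equiv.Perm (Fin 5)) * c5 * (b : Equiv.Perm (Fin 5))⁻¹ = c5 * c5 := by
      rw [← conj_d5]; exact hcoe
    exact key _ hsign hb4 this
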